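/- Let 0 ≤ j ≤ n-1. For every P ∈ MvPolynomial (Fin n) 𝔽_p with aeval(h) P = d_{n,j} (where aeval(h) substitutes h_1, …, h_n for the n variables), the exponent vector e with e_t = 0 for 1 ≤ t ≤ j and e_t = 1 for j+1 ≤ t ≤ n lies in the support of P with coefficient 1 (that is, the monomial h_{j+1} h_{j+2} ⋯ h_n occurs in d_{n,j} with coefficient 1), and e is the unique element of the support of P whose coordinates are weakly increasing (e_1 ≤ e_2 ≤ ⋯ ≤ e_n), i.e. the unique admissible monomial of d_{n,j}. -/

import Mathlib

section ident
open Polynomial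
variable (p : ℕ) [Fact p.Prime]
lemma prod_smul_identity {D : Type*} [CommRing D] [IsDomain D] [Algebra (ZMod p) D] (z t : D) :
    ∏ c : ZMod p, (z - c • t) = z ^ p - t ^ (p - 1) * z := by
  classical
  have hp2 : 2 ≤ p := (Fact.out : p.Prime).two_le
  have hcard : Fintype.card (ZMod p) = p := ZMod.card p
  -- first prove the polynomial version
  have key : ∏ c : ZMod p, (X - C (c • t)) = X ^ p - C (t ^ (p - 1)) * X := by
    by_cases ht : t = 0
    · subst ht
      have h0 : ∀ c : ZMod p, c • (0 : D) = 0 := fun c => smul_zero c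
      simp only [h0, C_0, sub_zero]
      rw [Finset.prod_const, Finset.card_univ, hcard]
      have : (0 : D) ^ (p - 1) = 0 := zero_pow (by omega)
      rw [this, C_0, zero_mul, sub_zero]
    · set P : D[X] := ∏ c : ZMod p, (X - C (c • t)) with hP
      set G : D[X] := X ^ p - C (t ^ (p - 1)) * X with hG
      have hPmonic : P.Monic := monic_prod_of_monic _ _ fun c _ => monic_X_sub_C _
      have hPdeg : P.natDegree = p := by
        rw [hP, natDegree_prod _ _ (fun c _ => X_sub_C_ne_zero _)]
        simp [natDegree_X_sub_C, hcard]
      have hGmonic : G.Monic := by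
        rw [hG, show p = (p - 1) + 1 by omega]
        apply monic_X_pow_sub
        refine lt_of_le_of_lt (degree_C_mul_X_le _) ?_
        exact_mod_cast (by omega : (1:ℕ) < p - 1 + 1)
      have hGdeg : G.natDegree = p := by
        rw [hG, natDegree_sub_eq_left_of_natDegree_lt, natDegree_X_pow]
        rw [natDegree_X_pow]
        calc (C (t ^ (p-1)) * X).natDegree ≤ 1 := by
              by_cases h : t ^ (p-1) = 0
              · simp [h]
              · exact le_of_eq (natDegree_C_mul_X _ h)
          _ < p := by omega
      set r : D[X] := P - G with hr
      by_cases hr0 : r = 0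
      · exact sub_eq_zero.mp hr0
      exfalso
      have hinj : Function.Injective (fun c : ZMod p => c • t) := by
        intro c1 c2 h
        simp only [Algebra.smul_def] at h
        have := mul_right_cancel₀ ht h
        exact (algebraMap (ZMod p) D).injective this
      have heval : ∀ c : ZMod p, r.eval (c • t) = 0 := by
        intro c
        have hPe : P.eval (c • t) = 0 := by
          rw [hP, eval_prod]
          apply Finset.prod_eq_zero (Finset.mem_univ c)
          rw [eval_sub, eval_X, eval_C, sub_self]
        have hGe : G.eval (c • t) = 0 := by
          rw [hG]
          simp only [eval_sub, eval_pow, eval_X, eval_mul, eval_C]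
          have h1 : (c • t) ^ p = c • t ^ p := by
            rw [_root_.smul_pow, ZMod.pow_card]
          have h2 : t ^ (p - 1) * (c • t) = c • t ^ p := by
            rw [mul_smul_comm, ← pow_succ, show p - 1 + 1 = p by omega]
          rw [h1, h2, sub_self]
        rw [hr, eval_sub, hPe, hGe, sub_zero]
      have hdeglt : r.natDegree < Fintype.card (ZMod p) := by
        rw [hcard]
        have hdlt : r.degree < P.degree := by
          apply degree_sub_lt
          · rw [degree_eq_natDegree hPmonic.ne_zero, degree_eq_natDegree hGmonic.ne_zero,
              hPdeg, hGdeg]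
          · exact hPmonic.ne_zero
          · rw [hPmonic.leadingCoeff, hGmonic.leadingCoeff]
        have h2 : r.degree < (p : WithBot ℕ) := by
          rw [degree_eq_natDegree hPmonic.ne_zero, hPdeg] at hdlt
          exact_mod_cast hdlt
        exact (natDegree_lt_iff_degree_lt hr0).mpr h2
      exact hr0 (eq_zero_of_natDegree_lt_card_of_eval_eq_zero r hinj heval hdeglt)
  have := congrArg (Polynomial.eval z) key
  rw [eval_prod] at this
  simp only [eval_sub, eval_X, eval_C, eval_pow, eval_mul] at this
  exact this

end ident

section padd
open Polynomial
variable (p : ℕ) [Fact p.Prime] {R : Type*} [CommRing R] [CharP R p]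
def Padd (p : ℕ) {R : Type*} [Semiring R] (g : Polynomial R) : Prop :=
  ∀ m ∈ g.support, ∃ i, m = p ^ i

namespace Padd

lemma comp_X_add_C {g : Polynomial R} (hg : Padd p g) (a : R) :
    g.comp (X + C a) = g + C (g.eval a) := by
  conv_lhs => rw [Polynomial.as_sum_support g]
  have hcomp : (∑ i ∈ g.support, monomial i (g.coeff i)).comp (X + C a)
      = ∑ i ∈ g.support, C (g.coeff i) * (X + C a) ^ i := by
    simp [Polynomial.comp, Polynomial.eval₂_finset_sum]
  rw [hcomp]
  have hterm : ∀ i ∈ g.support, C (g.coeff i) * (X + C a) ^ i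
      = monomial i (g.coeff i) + C (g.coeff i * a ^ i) := by
    intro i hi
    obtain ⟨e, rfl⟩ := hg i hi
    rw [add_pow_char_pow, ← C_pow, mul_add, ← C_mul, C_mul_X_pow_eq_monomial]
  rw [Finset.sum_congr rfl hterm, Finset.sum_add_distrib, ← Polynomial.as_sum_support,
    ← map_sum]
  congr 1
  rw [Polynomial.eval_eq_sum, Polynomial.sum_def]

lemma eval_smul {g : Polynomial R} (hg : Padd p g) [Algebra (ZMod p) R] (c : ZMod p) (y : R) :
    g.eval (c • y) = c • g.eval y := by
  rw [Polynomial.eval_eq_sum, Polynomial.eval_eq_sum, Polynomial.sum_def, Polynomial.sum_def,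
    Finset.smul_sum]
  refine Finset.sum_congr rfl fun i hi => ?_
  obtain ⟨e, rfl⟩ := hg i hi
  rw [_root_.smul_pow]
  have : c ^ p ^ e = c := ZMod.pow_card_pow c
  rw [this, mul_smul_comm]

lemma pow_p {g : Polynomial R} (hg : Padd p g) : Padd p (g ^ p) := by
  intro m hm
  rw [Polynomial.mem_support_iff] at hm
  have hp : 0 < p := (Fact.out : p.Prime).pos
  rw [← Polynomial.map_frobenius_expand, Polynomial.coeff_map, Polynomial.coeff_expand hp] at hm
  by_cases hdvd : p ∣ m
  · rw [if_pos hdvd] at hm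
    have : g.coeff (m / p) ≠ 0 := fun h => by simp [h] at hm
    obtain ⟨i, hi⟩ := hg (m / p) (Polynomial.mem_support_iff.mpr this)
    obtain ⟨q, rfl⟩ := hdvd
    rw [Nat.mul_div_cancel_left _ hp] at hi
    exact ⟨i + 1, by rw [pow_succ, ← hi, mul_comm]⟩
  · rw [if_neg hdvd] at hm
    simp at hm

lemma coeff_pow_p_mul (g : Polynomial R) (m : ℕ) :
    (g ^ p).coeff (p * m) = (g.coeff m) ^ p := by
  have hp : 0 < p := (Fact.out : p.Prime).pos
  rw [← Polynomial.map_frobenius_expand, Polynomial.coeff_map, Polynomial.coeff_expand hp]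
  rw [if_pos ⟨m, rfl⟩, Nat.mul_div_cancel_left _ hp]
  rfl

lemma coeff_pow_p_not_dvd (g : Polynomial R) {m : ℕ} (hm : ¬ p ∣ m) :
    (g ^ p).coeff m = 0 := by
  have hp : 0 < p := (Fact.out : p.Prime).pos
  rw [← Polynomial.map_frobenius_expand, Polynomial.coeff_map, Polynomial.coeff_expand hp, if_neg hm,
    map_zero]

lemma C_mul {g : Polynomial R} (hg : Padd p g) (h : R) : Padd p (Polynomial.C h * g) := by
  intro m hm
  rw [Polynomial.mem_support_iff, Polynomial.coeff_C_mul] at hm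
  exact hg m (Polynomial.mem_support_iff.mpr fun hz => hm (by rw [hz, mul_zero]))

lemma sub {g₁ g₂ : Polynomial R} (h₁ : Padd p g₁) (h₂ : Padd p g₂) : Padd p (g₁ - g₂) := by
  intro m hm
  rw [Polynomial.mem_support_iff, Polynomial.coeff_sub] at hm
  by_cases hc : g₁.coeff m = 0
  · exact h₂ m (Polynomial.mem_support_iff.mpr fun hz => hm (by rw [hc, hz, sub_zero]))
  · exact h₁ m (Polynomial.mem_support_iff.mpr hc)

lemma X : Padd p (Polynomial.X : Polynomial R) := by
  intro m hm
  rw [Polynomial.mem_support_iff, Polynomial.coeff_X] at hm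
  refine ⟨0, ?_⟩
  rw [pow_zero]
  by_contra h
  exact hm (if_neg (Ne.symm h))

end Padd

end padd

open MvPolynomial

/-- `V p n k` : the set of `𝔽_p`-linear combinations of the first `k` variables. -/
noncomputable def V (p n k : ℕ) [Fact p.Prime] : Finset (MvPolynomial (Fin n) (ZMod p)) :=
  (Finset.univ : Finset (Fin n → ZMod p)).image
    (fun c => ∑ j ∈ Finset.univ.filter (fun j : Fin n => j.val < k), C (c j) * X j)

/-- `f p n k = ∏_{u ∈ V_k} (X - C u)`. -/
noncomputable def f (p n k : ℕ) [Fact p.Prime] :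
    Polynomial (MvPolynomial (Fin n) (ZMod p)) :=
  ∏ u ∈ V p n k, (Polynomial.X - Polynomial.C u)

/-- Dickson invariant `d_{k,i}`. -/
noncomputable def d (p n k i : ℕ) [Fact p.Prime] : MvPolynomial (Fin n) (ZMod p) :=
  (-1) ^ (k - i) * (f p n k).coeff (p ^ i)

/-- Borel generator: `hGen p n j` is `h_{j+1}` of the paper. -/
noncomputable def hGen (p n : ℕ) [Fact p.Prime] (j : Fin n) : MvPolynomial (Fin n) (ZMod p) :=
  (Polynomial.eval (X j) (f p n j.val)) ^ (p - 1)

/-- Action of `GL_n(𝔽_p)` on `S` by linear substitution `g · y_j = ∑_i g_{ij} y_i`. -/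
noncomputable def gact (p n : ℕ) [Fact p.Prime] (g : GL (Fin n) (ZMod p)) :
    MvPolynomial (Fin n) (ZMod p) →ₐ[ZMod p] MvPolynomial (Fin n) (ZMod p) :=
  aeval (fun j : Fin n => ∑ i : Fin n, C ((g : Matrix (Fin n) (Fin n) (ZMod p)) i j) * X i)

set_option linter.unusedSectionVars false

section LeadMachinery
variable {n : ℕ} {K : Type*} [CommRing K] [IsDomain K]

/-- weight of an exponent vector -/
def Wt (n : ℕ) (d : Fin n →₀ ℕ) : ℕ := ∑ t : Fin n, d t * (t.val + 1)

lemma Wt_add (a b : Fin n →₀ ℕ) : Wt n (a + b) = Wt n a + Wt n b := by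
  simp [Wt, add_mul, Finset.sum_add_distrib]

lemma Wt_single (t : Fin n) (m : ℕ) : Wt n (Finsupp.single t m) = m * (t.val + 1) := by
  classical
  rw [Wt, Finset.sum_eq_single t]
  · simp
  · intro b _ hb; simp [Finsupp.single_apply, Ne.symm hb]
  · simp

/-- `g` has unique top-weight monomial `m`, with weight `D` and coefficient 1 -/
def Lead (g : MvPolynomial (Fin n) K) (D : ℕ) (m : Fin n →₀ ℕ) : Prop :=
  Wt n m = D ∧ coeff m g = 1 ∧ ∀ d ∈ g.support, Wt n d ≤ D ∧ (Wt n d = D → d = m)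

lemma Lead.one : Lead (1 : MvPolynomial (Fin n) K) 0 0 := by
  classical
  refine ⟨by simp [Wt], by simp, ?_⟩
  intro d hd
  have hd0 : d = 0 := by
    have h1 : (1 : MvPolynomial (Fin n) K) = MvPolynomial.monomial 0 (1:K) := by
      simp
    rw [h1] at hd
    have := MvPolynomial.support_monomial (s := (0 : Fin n →₀ ℕ)) (a := (1:K)) ▸ hd
    simp at this
    exact this
  subst hd0
  simp [Wt]

lemma Lead.mul {g₁ g₂ : MvPolynomial (Fin n) K} {D₁ D₂ m₁ m₂}
    (h₁ : Lead g₁ D₁ m₁) (h₂ : Lead g₂ D₂ m₂) : Lead (g₁ * g₂) (D₁ + D₂) (m₁ + m₂) := by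
  classical
  obtain ⟨hw₁, hc₁, hs₁⟩ := h₁
  obtain ⟨hw₂, hc₂, hs₂⟩ := h₂
  have key : ∀ a b : Fin n →₀ ℕ, a ∈ g₁.support → b ∈ g₂.support → a + b = m₁ + m₂ →
      a = m₁ ∧ b = m₂ := by
    intro a b ha hb hab
    have h1 := hs₁ a ha
    have h2 := hs₂ b hb
    have : Wt n a + Wt n b = D₁ + D₂ := by rw [← Wt_add, hab, Wt_add, hw₁, hw₂]
    have ha' : Wt n a = D₁ := by omega
    have hb' : Wt n b = D₂ := by omega
    exact ⟨h1.2 ha', h2.2 hb'⟩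
  have hcoeff : coeff (m₁ + m₂) (g₁ * g₂) = 1 := by
    rw [coeff_mul]
    rw [Finset.sum_eq_single (m₁, m₂)]
    · rw [hc₁, hc₂, one_mul]
    · rintro ⟨a, b⟩ hab hne
      simp only [Finset.HasAntidiagonal.mem_antidiagonal] at hab
      by_cases ha : a ∈ g₁.support
      · by_cases hb : b ∈ g₂.support
        · obtain ⟨rfl, rfl⟩ := key a b ha hb hab
          simp at hne
        · simp [MvPolynomial.notMem_support_iff.mp hb]
      · simp [MvPolynomial.notMem_support_iff.mp ha]
    · intro h
      simp [Finset.HasAntidiagonal.mem_antidiagonal] at h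
  refine ⟨by rw [Wt_add, hw₁, hw₂], hcoeff, ?_⟩
  intro d hd
  have := MvPolynomial.support_mul g₁ g₂ hd
  rw [Finset.mem_add] at this
  obtain ⟨a, ha, b, hb, rfl⟩ := this
  have h1 := hs₁ a ha
  have h2 := hs₂ b hb
  constructor
  · rw [Wt_add]; omega
  · intro hEq
    rw [Wt_add] at hEq
    have ha' : Wt n a = D₁ := by omega
    have hb' : Wt n b = D₂ := by omega
    rw [h1.2 ha', h2.2 hb']

lemma Lead.pow {g : MvPolynomial (Fin n) K} {D m} (h : Lead g D m) (k : ℕ) :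
    Lead (g ^ k) (k * D) (k • m) := by
  induction k with
  | zero => simpa using Lead.one
  | succ k ih =>
    have := ih.mul h
    rw [pow_succ]
    have e1 : (k+1) * D = k * D + D := by ring
    have e2 : (k+1) • m = k • m + m := succ_nsmul m k
    rw [e1, e2]; exact pow_succ g k ▸ this

lemma Lead.prod {ι : Type*} (s : Finset ι) (g : ι → MvPolynomial (Fin n) K)
    (D : ι → ℕ) (m : ι → (Fin n →₀ ℕ)) (h : ∀ i ∈ s, Lead (g i) (D i) (m i)) :
    Lead (∏ i ∈ s, g i) (∑ i ∈ s, D i) (∑ i ∈ s, m i) := by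
  classical
  induction s using Finset.cons_induction with
  | empty => simpa using Lead.one
  | cons i s hi ih =>
    rw [Finset.prod_cons, Finset.sum_cons, Finset.sum_cons]
    exact (h i (Finset.mem_cons_self i s)).mul
      (ih (fun j hj => h j (Finset.mem_cons_of_mem hj)))

end LeadMachinery

section Vfacts
variable (p n : ℕ) [Fact p.Prime]

lemma zero_mem_V (k : ℕ) : 0 ∈ V p n k := by
  simp only [V, Finset.mem_image]
  exact ⟨0, Finset.mem_univ _, by simp⟩

lemma support_of_mem_V {k : ℕ} {u : MvPolynomial (Fin n) (ZMod p)} (hu : u ∈ V p n k) :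
    ∀ d ∈ u.support, ∃ j : Fin n, j.val < k ∧ d = Finsupp.single j 1 := by
  classical
  simp only [V, Finset.mem_image] at hu
  obtain ⟨c, -, rfl⟩ := hu
  intro d hd
  have := MvPolynomial.support_sum hd
  rw [Finset.mem_biUnion] at this
  obtain ⟨j, hj, hdj⟩ := this
  rw [Finset.mem_filter] at hj
  refine ⟨j, hj.2, ?_⟩
  have : (C (c j) * X j : MvPolynomial (Fin n) (ZMod p)) = monomial (Finsupp.single j 1) (c j) := by
    rw [MvPolynomial.X, MvPolynomial.C_mul_monomial, mul_one]
  rw [this] at hdj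
  have := MvPolynomial.support_monomial (s := Finsupp.single j 1) (a := c j) ▸ hdj
  by_cases hc : c j = 0 <;> simp [hc] at this
  exact this

lemma coeff_single_of_mem_V {k : ℕ} {u : MvPolynomial (Fin n) (ZMod p)} (hu : u ∈ V p n k)
    (t : Fin n) (ht : k ≤ t.val) : coeff (Finsupp.single t 1) u = 0 := by
  by_contra hc
  obtain ⟨j, hj, hd⟩ := support_of_mem_V p n hu _ (MvPolynomial.mem_support_iff.mpr hc)
  have : j = t := by
    have := (Finsupp.single_left_injective (by norm_num)) hd.symm
    exact this
  omega

lemma lead_X_sub_u {k : ℕ} (t : Fin n) (ht : k ≤ t.val) {u : MvPolynomial (Fin n) (ZMod p)}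
    (hu : u ∈ V p n k) : Lead (X t - u) (t.val + 1) (Finsupp.single t 1) := by
  classical
  refine ⟨by rw [Wt_single]; ring, ?_, ?_⟩
  · rw [MvPolynomial.coeff_sub, coeff_single_of_mem_V p n hu t ht, MvPolynomial.coeff_X]
    simp
  · intro d hd
    have hsub : (X t - u : MvPolynomial (Fin n) (ZMod p)).support ⊆
        (X t : MvPolynomial (Fin n) (ZMod p)).support ∪ u.support := by
      intro d hd
      rw [MvPolynomial.mem_support_iff, MvPolynomial.coeff_sub] at hd
      rw [Finset.mem_union, MvPolynomial.mem_support_iff, MvPolynomial.mem_support_iff]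
      by_contra hc
      push_neg at hc
      rw [hc.1, hc.2] at hd
      simp at hd
    rcases Finset.mem_union.mp (hsub hd) with h | h
    · rw [MvPolynomial.support_X, Finset.mem_singleton] at h
      subst h
      exact ⟨by rw [Wt_single]; omega, fun _ => rfl⟩
    · obtain ⟨j, hj, rfl⟩ := support_of_mem_V p n hu _ h
      rw [Wt_single]
      constructor
      · omega
      · intro hEq
        omega
end Vfacts



section inj
variable (p n : ℕ) [Fact p.Prime]

/-- the top weight of hGen t -/
noncomputable def aW (p n : ℕ) [Fact p.Prime] (t : Fin n) : ℕ := (p - 1) * (V p n t.val).card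

lemma aW_pos (t : Fin n) : 0 < aW p n t := by
  have hp : 2 ≤ p := (Fact.out : p.Prime).two_le
  have : 0 < (V p n t.val).card := Finset.card_pos.mpr ⟨0, zero_mem_V p n _⟩
  have h2 : 0 < p - 1 := by omega
  exact Nat.mul_pos h2 this

lemma Wt_sum {ι : Type*} (s : Finset ι) (m : ι → (Fin n →₀ ℕ)) :
    Wt n  (∑ i ∈ s, m i) = ∑ i ∈ s, Wt n  (m i) := by
  classical
  induction s using Finset.cons_induction with
  | empty => simp [Wt]
  | cons i s hi ih => rw [Finset.sum_cons, Finset.sum_cons, Wt_add, ih]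

lemma lead_hGen (t : Fin n) :
    Lead (hGen p n t) (aW p n t * (t.val + 1)) (Finsupp.single t (aW p n t)) := by
  have heval : Polynomial.eval (X t) (f p n t.val)
      = ∏ u ∈ V p n t.val, (X t - u) := by
    rw [f, Polynomial.eval_prod]
    exact Finset.prod_congr rfl fun u _ => by
      rw [Polynomial.eval_sub, Polynomial.eval_X, Polynomial.eval_C]
  have hprod : Lead (∏ u ∈ V p n t.val, (X t - u))
      ((V p n t.val).card * (t.val + 1)) (Finsupp.single t (V p n t.val).card) := by
    have := Lead.prod (V p n t.val) (fun u => X t - u) (fun _ => t.val + 1)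
      (fun _ => Finsupp.single t 1) (fun u hu => lead_X_sub_u p n t le_rfl hu)
    simpa [Finset.sum_const, Finsupp.smul_single, smul_eq_mul] using this
  have := hprod.pow (p - 1)
  rw [hGen, heval]
  rw [Finsupp.smul_single, smul_eq_mul] at this
  have e1 : aW p n t * (t.val + 1) = (p - 1) * ((V p n t.val).card * (t.val + 1)) := by
    rw [aW]; ring
  have e2 : Finsupp.single t (aW p n t) = Finsupp.single t ((p-1) * (V p n t.val).card) := by
    rw [aW]
  rw [e1, e2]
  exact this

/-- the product ∏ hGen^e -/
noncomputable def Hh (e : Fin n →₀ ℕ) : MvPolynomial (Fin n) (ZMod p) :=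
  ∏ t : Fin n, hGen p n t ^ e t

noncomputable def Dg (e : Fin n →₀ ℕ) : ℕ := ∑ t : Fin n, e t * (aW p n t * (t.val + 1))

noncomputable def Mm (e : Fin n →₀ ℕ) : Fin n →₀ ℕ :=
  ∑ t : Fin n, Finsupp.single t (e t * aW p n t)

lemma lead_Hh (e : Fin n →₀ ℕ) : Lead (Hh p n e) (Dg p n e) (Mm p n e) := by
  have := Lead.prod (Finset.univ : Finset (Fin n)) (fun t => hGen p n t ^ e t)
    (fun t => e t * (aW p n t * (t.val + 1)))
    (fun t => Finsupp.single t (e t * aW p n t))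
    (fun t _ => by
      have := (lead_hGen p n t).pow (e t)
      rwa [Finsupp.smul_single, smul_eq_mul] at this)
  exact this

lemma Wt_Mm (e : Fin n →₀ ℕ) : Wt n  (Mm p n e) = Dg p n e := by
  rw [Mm, Wt_sum, Dg]
  exact Finset.sum_congr rfl fun t _ => by rw [Wt_single]; ring

lemma Mm_apply (e : Fin n →₀ ℕ) (t : Fin n) : Mm p n e t = e t * aW p n t := by
  classical
  rw [Mm, Finsupp.finset_sum_apply, Finset.sum_eq_single t]
  · simp
  · intro b _ hb; simp [Finsupp.single_apply, hb]
  · simp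

lemma Mm_inj : Function.Injective (Mm p n) := by
  intro e e' h
  ext t
  have := congrArg (fun g => g t) h
  simp only [Mm_apply] at this
  exact Nat.eq_of_mul_eq_mul_right (aW_pos p n t) this

theorem aeval_hGen_ne_zero {Q : MvPolynomial (Fin n) (ZMod p)} (hQ : Q ≠ 0) :
    aeval (hGen p n) Q ≠ 0 := by
  classical
  obtain ⟨e0, he0, hmax⟩ := Finset.exists_max_image Q.support (Dg p n)
    (Finset.nonempty_iff_ne_empty.mpr (by simpa using hQ))
  intro habs
  have hexp : aeval (hGen p n) Q = ∑ e ∈ Q.support, C (coeff e Q) * Hh p n e := by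
    conv_lhs => rw [MvPolynomial.as_sum Q]
    rw [map_sum]
    refine Finset.sum_congr rfl fun e _ => ?_
    rw [aeval_monomial, Finsupp.prod_pow]
    rfl
  have hco : coeff (Mm p n e0) (aeval (hGen p n) Q) = coeff e0 Q := by
    rw [hexp, MvPolynomial.coeff_sum]
    rw [Finset.sum_eq_single e0]
    · rw [coeff_C_mul, (lead_Hh p n e0).2.1, mul_one]
    · intro e he hne
      rw [coeff_C_mul]
      have : coeff (Mm p n e0) (Hh p n e) = 0 := by
        by_contra hc
        have hmem := MvPolynomial.mem_support_iff.mpr hc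
        have h1 := (lead_Hh p n e).2.2 _ hmem
        have h2 : Wt n  (Mm p n e0) = Dg p n e0 := Wt_Mm p n e0
        have h3 : Dg p n e ≤ Dg p n e0 := hmax e he
        have h4 : Dg p n e0 ≤ Dg p n e := h2 ▸ h1.1
        have h5 : Mm p n e0 = Mm p n e := h1.2 (by omega)
        exact hne (Mm_inj p n h5.symm)
      rw [this, mul_zero]
    · intro h; exact absurd he0 h
  rw [habs] at hco
  simp only [coeff_zero] at hco
  exact (MvPolynomial.mem_support_iff.mp he0) hco.symm

theorem aeval_hGen_injective :
    Function.Injective (aeval (hGen p n) :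
      MvPolynomial (Fin n) (ZMod p) →ₐ[ZMod p] MvPolynomial (Fin n) (ZMod p)) := by
  intro a b hab
  by_contra hne
  have : a - b ≠ 0 := sub_ne_zero.mpr hne
  exact aeval_hGen_ne_zero p n this (by rw [map_sub, hab, sub_self])
end inj

section rec
variable (p n : ℕ) [Fact p.Prime]

lemma V_zero : V p n 0 = {0} := by
  apply Finset.eq_singleton_iff_nonempty_unique_mem.mpr
  constructor
  · exact (Finset.image_nonempty).mpr Finset.univ_nonempty
  · intro u hu
    simp only [V, Finset.mem_image] at hu
    obtain ⟨c, -, rfl⟩ := hu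
    have : Finset.univ.filter (fun j : Fin n => j.val < 0) = ∅ := by
      apply Finset.filter_false_of_mem; intro j _; omega
    rw [this, Finset.sum_empty]

lemma f_zero : f p n 0 = Polynomial.X := by
  rw [f, V_zero, Finset.prod_singleton, Polynomial.C_0, sub_zero]

lemma coeff_single_CX (t : Fin n) (c : ZMod p) :
    coeff (Finsupp.single t 1) (C c * X t : MvPolynomial (Fin n) (ZMod p)) = c := by
  classical
  rw [coeff_C_mul, MvPolynomial.coeff_X]
  simp

lemma V_succ {k : ℕ} (hk : k < n) :
    V p n (k + 1) = Finset.image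
      (fun uc : MvPolynomial (Fin n) (ZMod p) × ZMod p => uc.1 + C uc.2 * X ⟨k, hk⟩)
      ((V p n k) ×ˢ Finset.univ) := by
  classical
  have hfilter : (Finset.univ.filter (fun j : Fin n => j.val < k + 1))
      = insert ⟨k, hk⟩ (Finset.univ.filter (fun j : Fin n => j.val < k)) := by
    ext j
    simp only [Finset.mem_filter, Finset.mem_insert, Finset.mem_univ, true_and]
    constructor
    · intro h
      rcases Nat.lt_succ_iff_lt_or_eq.mp h with h | h
      · exact Or.inr h
      · exact Or.inl (Fin.ext h)
    · rintro (rfl | h)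
      · simp
      · omega
  have hnotmem : (⟨k, hk⟩ : Fin n) ∉ Finset.univ.filter (fun j : Fin n => j.val < k) := by
    simp
  ext u
  simp only [V, Finset.mem_image]
  constructor
  · rintro ⟨c, -, rfl⟩
    refine ⟨(∑ j ∈ Finset.univ.filter (fun j : Fin n => j.val < k), C (c j) * X j, c ⟨k, hk⟩),
      ?_, ?_⟩
    · rw [Finset.mem_product]
      exact ⟨Finset.mem_image.mpr ⟨c, Finset.mem_univ _, rfl⟩, Finset.mem_univ _⟩
    · rw [hfilter, Finset.sum_insert hnotmem]
      ring
  · rintro ⟨⟨u', cc⟩, huc, rfl⟩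
    rw [Finset.mem_product] at huc
    obtain ⟨hu', -⟩ := huc
    simp only [V, Finset.mem_image] at hu'
    obtain ⟨c, -, rfl⟩ := hu'
    refine ⟨Function.update c ⟨k, hk⟩ cc, Finset.mem_univ _, ?_⟩
    rw [hfilter, Finset.sum_insert hnotmem, Function.update_self]
    have : ∀ j ∈ Finset.univ.filter (fun j : Fin n => j.val < k),
        C (Function.update c ⟨k, hk⟩ cc j) * X j = C (c j) * X j := by
      intro j hj
      rw [Finset.mem_filter] at hj
      have : j ≠ ⟨k, hk⟩ := by
        intro h
        have h2 := hj.2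
        rw [h] at h2
        simp only [Fin.val_mk] at h2
        omega
      rw [Function.update_of_ne this]
    rw [Finset.sum_congr rfl this]
    ring

lemma V_succ_inj {k : ℕ} (hk : k < n) :
    Set.InjOn (fun uc : MvPolynomial (Fin n) (ZMod p) × ZMod p => uc.1 + C uc.2 * X ⟨k, hk⟩)
      ((V p n k) ×ˢ (Finset.univ : Finset (ZMod p))) := by
  rintro ⟨u1, c1⟩ h1 ⟨u2, c2⟩ h2 heq
  simp only [Finset.coe_product, Set.mem_prod, Finset.mem_coe, Finset.mem_product] at h1 h2
  simp only at heq
  have hcoeff := congrArg (coeff (Finsupp.single (⟨k, hk⟩ : Fin n) 1)) heq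
  simp only [MvPolynomial.coeff_add] at hcoeff
  rw [coeff_single_of_mem_V p n h1.1 _ le_rfl, coeff_single_of_mem_V p n h2.1 _ le_rfl,
    coeff_single_CX, coeff_single_CX, zero_add, zero_add] at hcoeff
  subst hcoeff
  have : u1 = u2 := by
    have := add_right_cancel heq
    exact this
  rw [this]

theorem f_step {k : ℕ} (hk : k < n) (hPadd : Padd p (f p n k)) :
    f p n (k + 1) = f p n k ^ p - Polynomial.C (hGen p n ⟨k, hk⟩) * f p n k := by
  classical
  set t : MvPolynomial (Fin n) (ZMod p) := Polynomial.eval (X ⟨k, hk⟩) (f p n k) with ht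
  have step1 : f p n (k+1)
      = ∏ c : ZMod p, (f p n k).comp (Polynomial.X - Polynomial.C (C c * X ⟨k, hk⟩)) := by
    rw [f, V_succ p n hk, Finset.prod_image (fun x hx y hy h =>
      V_succ_inj p n hk (by simpa using hx) (by simpa using hy) h)]
    rw [Finset.prod_product_right]
    refine Finset.prod_congr rfl fun c _ => ?_
    rw [f, Polynomial.prod_comp]
    refine Finset.prod_congr rfl fun u _ => ?_
    rw [Polynomial.sub_comp, Polynomial.X_comp, Polynomial.C_comp, map_add]
    ring
  have step2 : ∀ c : ZMod p,
      (f p n k).comp (Polynomial.X - Polynomial.C (C c * X ⟨k, hk⟩))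
      = f p n k - Polynomial.C (c • t) := by
    intro c
    have h1 : Polynomial.X - Polynomial.C (C c * X (⟨k, hk⟩ : Fin n))
        = Polynomial.X + Polynomial.C (-(C c * X (⟨k, hk⟩ : Fin n))) := by
      rw [map_neg]; ring
    rw [h1, hPadd.comp_X_add_C]
    have h2 : -(C c * X (⟨k, hk⟩ : Fin n)) = (-c) • X (⟨k, hk⟩ : Fin n) := by
      rw [← smul_eq_C_mul, neg_smul]
    rw [h2, hPadd.eval_smul, neg_smul, ← ht, map_neg, ← sub_eq_add_neg]
  have step3 : f p n (k+1) = ∏ c : ZMod p, (f p n k - Polynomial.C (c • t)) := by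
    rw [step1]; exact Finset.prod_congr rfl fun c _ => step2 c
  have step4 : ∀ c : ZMod p, Polynomial.C (c • t)
      = c • (Polynomial.C t : Polynomial (MvPolynomial (Fin n) (ZMod p))) := by
    intro c; rw [Polynomial.smul_C]
  rw [step3]
  calc ∏ c : ZMod p, (f p n k - Polynomial.C (c • t))
      = ∏ c : ZMod p, (f p n k - c • (Polynomial.C t)) := by
        exact Finset.prod_congr rfl fun c _ => by rw [step4]
    _ = f p n k ^ p - (Polynomial.C t) ^ (p-1) * f p n k := prod_smul_identity p _ _
    _ = f p n k ^ p - Polynomial.C (hGen p n ⟨k, hk⟩) * f p n k := by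
        rw [← Polynomial.C_pow, hGen]

theorem f_Padd : ∀ k, k ≤ n → Padd p (f p n k) := by
  intro k
  induction k with
  | zero => intro _; rw [f_zero]; exact Padd.X p
  | succ k ih =>
    intro hk1
    have hk : k < n := by omega
    have hP := ih (by omega)
    rw [f_step p n hk hP]
    exact Padd.sub p (Padd.pow_p p hP) (Padd.C_mul p hP _)

theorem f_rec {k : ℕ} (hk : k < n) :
    f p n (k + 1) = f p n k ^ p - Polynomial.C (hGen p n ⟨k, hk⟩) * f p n k :=
  f_step p n hk (f_Padd p n k (le_of_lt hk))
end rec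

section part7
variable (p n : ℕ) [Fact p.Prime]

lemma card_V : ∀ k, k ≤ n → (V p n k).card = p ^ k := by
  intro k
  induction k with
  | zero => intro _; rw [V_zero, Finset.card_singleton, pow_zero]
  | succ k ih =>
    intro hk1
    have hk : k < n := by omega
    rw [V_succ p n hk, Finset.card_image_of_injOn (by rw [Finset.coe_product]; exact V_succ_inj p n hk), Finset.card_product,
      ih (by omega), Finset.card_univ, ZMod.card, pow_succ]

lemma f_monic (k : ℕ) : (f p n k).Monic :=
  Polynomial.monic_prod_of_monic _ _ fun u _ => Polynomial.monic_X_sub_C u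

lemma f_natDegree {k : ℕ} (hk : k ≤ n) : (f p n k).natDegree = p ^ k := by
  rw [f, Polynomial.natDegree_prod _ _ (fun u _ => Polynomial.X_sub_C_ne_zero u)]
  simp [Polynomial.natDegree_X_sub_C, card_V p n k hk]

lemma d_top {k : ℕ} (hk : k ≤ n) : d p n k k = 1 := by
  rw [d, Nat.sub_self, pow_zero, one_mul, ← f_natDegree p n hk]
  exact (f_monic p n k).coeff_natDegree

lemma neg_one_pow_p_add_one : ((-1 : MvPolynomial (Fin n) (ZMod p)) ^ (p + 1)) = 1 := by
  rcases (Fact.out : p.Prime).eq_two_or_odd' with h2 | hodd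
  · subst h2
    have : (-1 : MvPolynomial (Fin n) (ZMod 2)) = 1 := by
      have : (2 : MvPolynomial (Fin n) (ZMod 2)) = 0 := by
        have := CharP.cast_eq_zero (MvPolynomial (Fin n) (ZMod 2)) 2
        exact_mod_cast this
      linear_combination (-1 : MvPolynomial (Fin n) (ZMod 2)) * this
    rw [this, one_pow]
  · exact Even.neg_one_pow (by rcases hodd with ⟨m, hm⟩; exact ⟨(m+1), by omega⟩)

lemma sign_combine {a : ℕ} (ha : 1 ≤ a) (d1 d2 h : MvPolynomial (Fin n) (ZMod p)) :
    (-1)^a * (((-1)^a * d1)^p - h * ((-1)^(a-1) * d2)) = d1^p + h * d2 := by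
  have e1 : (-1 : MvPolynomial (Fin n) (ZMod p))^a * (-1 : MvPolynomial (Fin n) (ZMod p))^(a*p) = 1 := by
    rw [← pow_add, show a + a * p = (p + 1) * a by ring, pow_mul, neg_one_pow_p_add_one,
      one_pow]
  have e2 : (-1 : MvPolynomial (Fin n) (ZMod p))^a * (-1 : MvPolynomial (Fin n) (ZMod p))^(a-1) = -1 := by
    rw [← pow_add, show a + (a - 1) = 2 * (a - 1) + 1 by omega, pow_succ, pow_mul]
    simp
  linear_combination (d1^p) * e1 - (h * d2) * e2

lemma d_rec_zero {k : ℕ} (hk : k < n) :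
    d p n (k+1) 0 = hGen p n ⟨k, hk⟩ * d p n k 0 := by
  have hp2 : 2 ≤ p := (Fact.out : p.Prime).two_le
  have hco : (f p n (k+1)).coeff (p ^ 0)
      = - (hGen p n ⟨k, hk⟩ * (f p n k).coeff (p ^ 0)) := by
    rw [f_rec p n hk, Polynomial.coeff_sub, Polynomial.coeff_C_mul, pow_zero,
      Padd.coeff_pow_p_not_dvd p (hm := (Fact.out : p.Prime).not_dvd_one), zero_sub]
  rw [d, d, hco, Nat.sub_zero, Nat.sub_zero, pow_succ]
  ring

lemma d_rec_succ {k i : ℕ} (hk : k < n) (hik : i + 1 ≤ k) :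
    d p n (k+1) (i+1) = (d p n k i)^p + hGen p n ⟨k, hk⟩ * d p n k (i+1) := by
  have hco : (f p n (k+1)).coeff (p ^ (i+1))
      = ((f p n k).coeff (p ^ i))^p - hGen p n ⟨k, hk⟩ * (f p n k).coeff (p ^ (i+1)) := by
    rw [f_rec p n hk, Polynomial.coeff_sub, Polynomial.coeff_C_mul,
      show p ^ (i+1) = p * p ^ i from by rw [pow_succ]; ring,
      Padd.coeff_pow_p_mul]
  have hc1 : (f p n k).coeff (p ^ i) = (-1)^(k-i) * d p n k i := by
    rw [d, ← mul_assoc, ← pow_add, show (k-i) + (k-i) = 2*(k-i) by omega, pow_mul]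
    simp
  have hc2 : (f p n k).coeff (p ^ (i+1)) = (-1)^(k-(i+1)) * d p n k (i+1) := by
    rw [d, ← mul_assoc, ← pow_add, show (k-(i+1)) + (k-(i+1)) = 2*(k-(i+1)) by omega, pow_mul]
    simp
  rw [d, hco, hc1, hc2]
  have ha : 1 ≤ k - i := by omega
  have := sign_combine p n ha (d p n k i) (d p n k (i+1)) (hGen p n ⟨k, hk⟩)
  rw [show k + 1 - (i+1) = k - i by omega, show k - (i+1) = (k-i) - 1 by omega]
  exact this
end part7

section frob
variable (p : ℕ) [Fact p.Prime] {n : ℕ}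

lemma pow_p_expand (Q : MvPolynomial (Fin n) (ZMod p)) :
    Q ^ p = ∑ e ∈ Q.support, monomial (p • e) (coeff e Q) := by
  conv_lhs => rw [MvPolynomial.as_sum Q]
  rw [sum_pow_char]
  refine Finset.sum_congr rfl fun e _ => ?_
  rw [monomial_pow, ZMod.pow_card]

lemma pow_p_coeff (Q : MvPolynomial (Fin n) (ZMod p)) (e0 : Fin n →₀ ℕ) :
    coeff (p • e0) (Q ^ p) = coeff e0 Q := by
  classical
  rw [pow_p_expand]
  rw [MvPolynomial.coeff_sum]
  rw [Finset.sum_eq_single e0]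
  · rw [coeff_monomial, if_pos rfl]
  · intro e he hne
    rw [coeff_monomial, if_neg]
    intro h
    apply hne
    ext t
    have := congrArg (fun g => g t) h
    simp only [Finsupp.smul_apply, smul_eq_mul] at this
    have hp : 0 < p := (Fact.out : p.Prime).pos
    exact Nat.eq_of_mul_eq_mul_left hp this
  · intro he0
    rw [coeff_monomial, if_pos rfl, MvPolynomial.notMem_support_iff.mp he0]

lemma pow_p_supp (Q : MvPolynomial (Fin n) (ZMod p)) {m : Fin n →₀ ℕ}
    (hm : m ∈ (Q ^ p).support) : ∃ e ∈ Q.support, m = p • e := by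
  classical
  rw [pow_p_expand] at hm
  have := MvPolynomial.support_sum hm
  rw [Finset.mem_biUnion] at this
  obtain ⟨e, he, hme⟩ := this
  refine ⟨e, he, ?_⟩
  have := MvPolynomial.support_monomial (s := p • e) (a := coeff e Q) ▸ hme
  by_cases hc : coeff e Q = 0 <;> simp [hc] at this
  exact this

lemma pow_p_coeff_zero (Q : MvPolynomial (Fin n) (ZMod p)) {m : Fin n →₀ ℕ}
    (hm : ∀ e, m ≠ p • e) : coeff m (Q ^ p) = 0 := by
  by_contra hc
  obtain ⟨e, -, hme⟩ := pow_p_supp p Q (MvPolynomial.mem_support_iff.mpr hc)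
  exact hm e hme

lemma X_mul_supp {t : Fin n} {Q : MvPolynomial (Fin n) (ZMod p)} {m : Fin n →₀ ℕ}
    (hm : m ∈ (X t * Q).support) : ∃ e ∈ Q.support, m = Finsupp.single t 1 + e := by
  classical
  have hX : (X t : MvPolynomial (Fin n) (ZMod p)) = monomial (Finsupp.single t 1) 1 := by
    rfl
  have := MvPolynomial.support_mul _ _ hm
  rw [Finset.mem_add] at this
  obtain ⟨a, ha, b, hb, rfl⟩ := this
  rw [hX] at ha
  have := MvPolynomial.support_monomial (s := Finsupp.single t 1) (a := (1 : ZMod p)) ▸ ha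
  simp only [one_ne_zero, if_false, Finset.mem_singleton] at this
  exact ⟨b, hb, by rw [this]⟩
end frob

section DDdef
variable (p n : ℕ) [Fact p.Prime]

noncomputable def xv (p n : ℕ) [Fact p.Prime] (k : ℕ) : MvPolynomial (Fin n) (ZMod p) :=
  if h : k < n then X (⟨k, h⟩ : Fin n) else 0

noncomputable def DD (p n : ℕ) [Fact p.Prime] : ℕ → ℕ → MvPolynomial (Fin n) (ZMod p)
  | 0, i => if i = 0 then 1 else 0
  | (k+1), 0 => xv p n k * DD p n k 0
  | (k+1), (i+1) => (DD p n k i) ^ p + xv p n k * DD p n k (i+1)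

lemma DD_gt : ∀ k i, k < i → DD p n k i = 0 := by
  intro k
  induction k with
  | zero => intro i hi; rw [DD, if_neg (by omega)]
  | succ k ih =>
    intro i hi
    match i, hi with
    | (i+1), hi =>
      rw [DD, ih i (by omega), ih (i+1) (by omega), mul_zero, add_zero, zero_pow
        (Fact.out : p.Prime).ne_zero]

lemma DD_diag : ∀ k, DD p n k k = 1 := by
  intro k
  induction k with
  | zero => rw [DD, if_pos rfl]
  | succ k ih => rw [DD, ih, DD_gt p n k (k+1) (by omega), mul_zero, add_zero, one_pow]

/-- the admissible exponent vector -/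
noncomputable def estar (n k i : ℕ) : Fin n →₀ ℕ :=
  Finsupp.equivFunOnFinite.symm (fun t : Fin n => if i ≤ t.val ∧ t.val < k then 1 else 0)

lemma estar_apply (k i : ℕ) (t : Fin n) :
    estar n k i t = if i ≤ t.val ∧ t.val < k then 1 else 0 :=
  Finsupp.equivFunOnFinite_symm_apply_apply _ _

lemma estar_zero (i : ℕ) : estar n 0 i = 0 := by
  ext t
  rw [estar_apply, if_neg (by omega)]
  rfl

lemma estar_succ {k i : ℕ} (hik : i ≤ k) (hk : k < n) :
    estar n (k+1) i = Finsupp.single (⟨k, hk⟩ : Fin n) 1 + estar n k i := by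
  ext t
  rw [Finsupp.add_apply, estar_apply, estar_apply, Finsupp.single_apply]
  by_cases ht : (⟨k, hk⟩ : Fin n) = t
  · subst ht
    rw [if_pos rfl, if_pos (by simp; omega), if_neg (by simp)]
  · have htv : t.val ≠ k := fun h => ht (Fin.ext h.symm)
    rw [if_neg ht]
    by_cases h1 : i ≤ t.val ∧ t.val < k
    · rw [if_pos h1, if_pos (by omega)]
    · rw [if_neg h1, if_neg (by omega)]
end DDdef

section main
variable (p n : ℕ) [Fact p.Prime]

lemma estar_degenerate {k i : ℕ} (hki : k ≤ i) : estar n k i = 0 := by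
  ext t
  rw [estar_apply, if_neg (by omega)]
  rfl

theorem DD_aeval : ∀ k, k ≤ n → ∀ i, i ≤ k → aeval (hGen p n) (DD p n k i) = d p n k i := by
  intro k
  induction k with
  | zero =>
    intro _ i hi
    interval_cases i
    rw [DD, if_pos rfl, map_one, d_top p n (by omega)]
  | succ k ih =>
    intro hk1 i hi
    have hk : k < n := by omega
    have hxv : xv p n k = X (⟨k, hk⟩ : Fin n) := dif_pos hk
    rcases Nat.lt_or_ge i (k+1) with hik | hik
    · match i with
      | 0 =>
        rw [DD, hxv, map_mul, aeval_X, ih (by omega) 0 (by omega), d_rec_zero p n hk]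
      | (i+1) =>
        rw [DD, hxv, map_add, map_mul, map_pow, aeval_X, ih (by omega) i (by omega),
          ih (by omega) (i+1) (by omega), d_rec_succ p n hk (by omega)]
    · have : i = k + 1 := by omega
      subst this
      rw [DD_diag, map_one, d_top p n hk1]

lemma mem_support_one {e : Fin n →₀ ℕ} (he : e ∈ (1 : MvPolynomial (Fin n) (ZMod p)).support) :
    e = 0 := by
  classical
  have h1 : (1 : MvPolynomial (Fin n) (ZMod p)) = monomial 0 (1 : ZMod p) := by simp
  rw [h1] at he
  have := MvPolynomial.support_monomial (s := (0 : Fin n →₀ ℕ)) (a := (1 : ZMod p)) ▸ he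
  simp at this
  exact this

theorem DD_support : ∀ k, k ≤ n → ∀ i, i ≤ k →
    (coeff (estar n k i) (DD p n k i) = 1) ∧
    (∀ e ∈ (DD p n k i).support, ∀ t : Fin n, k ≤ t.val → e t = 0) ∧
    (∀ e ∈ (DD p n k i).support,
      (∀ a b : Fin n, a.val < k → b.val < k → a ≤ b → e a ≤ e b) → e = estar n k i) := by
  intro k
  induction k with
  | zero =>
    intro _ i hi
    interval_cases i
    rw [DD, if_pos rfl]
    refine ⟨by rw [estar_degenerate n le_rfl]; simp, ?_, ?_⟩
    · intro e he t _
      rw [mem_support_one p n he]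
      rfl
    · intro e he _
      rw [mem_support_one p n he, estar_degenerate n le_rfl]
  | succ k ih =>
    intro hk1 i hi
    have hk : k < n := by omega
    have hxv : xv p n k = X (⟨k, hk⟩ : Fin n) := dif_pos hk
    rcases Nat.lt_or_ge i (k+1) with hik' | hik'
    · have hik : i ≤ k := by omega
      -- facts about the B part
      obtain ⟨ihc, ihs, ihu⟩ := ih (by omega) i hik
      have hBc : coeff (estar n (k+1) i) (X (⟨k, hk⟩ : Fin n) * DD p n k i) = 1 := by
        rw [estar_succ n hik hk, coeff_X_mul, ihc]
      have hBs : ∀ e ∈ (X (⟨k, hk⟩ : Fin n) * DD p n k i).support,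
          ∀ t : Fin n, k + 1 ≤ t.val → e t = 0 := by
        intro e he t ht
        obtain ⟨e', he', rfl⟩ := X_mul_supp p he
        rw [Finsupp.add_apply, Finsupp.single_apply, if_neg (by
          intro hh; have := congrArg Fin.val hh; simp at this; omega),
          ihs e' he' t (by omega)]
      have hBu : ∀ e ∈ (X (⟨k, hk⟩ : Fin n) * DD p n k i).support,
          (∀ a b : Fin n, a.val < k + 1 → b.val < k + 1 → a ≤ b → e a ≤ e b) →
          e = estar n (k+1) i := by
        intro e he hincr
        obtain ⟨e', he', rfl⟩ := X_mul_supp p he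
        have h1 : ∀ a b : Fin n, a.val < k → b.val < k → a ≤ b → e' a ≤ e' b := by
          intro a b ha hb hab
          have h2 := hincr a b (by omega) (by omega) hab
          have hsa : Finsupp.single (⟨k, hk⟩ : Fin n) 1 a = 0 := by
            rw [Finsupp.single_apply, if_neg]
            intro hh; have := congrArg Fin.val hh; simp at this; omega
          have hsb : Finsupp.single (⟨k, hk⟩ : Fin n) 1 b = 0 := by
            rw [Finsupp.single_apply, if_neg]
            intro hh; have := congrArg Fin.val hh; simp at this; omega
          rw [Finsupp.add_apply, Finsupp.add_apply, hsa, hsb] at h2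
          simpa using h2
        rw [ihu e' he' h1, estar_succ n hik hk]
      -- now split on i = 0 vs i ≥ 1
      rcases Nat.eq_zero_or_pos i with rfl | ipos
      · rw [DD, hxv]
        exact ⟨hBc, hBs, hBu⟩
      · obtain ⟨i, rfl⟩ : ∃ i', i = i' + 1 := ⟨i - 1, by omega⟩
        obtain ⟨ihc', ihs', ihu'⟩ := ih (by omega) i (by omega)
        have hp2 : 2 ≤ p := (Fact.out : p.Prime).two_le
        have hAc : coeff (estar n (k+1) (i+1)) ((DD p n k i) ^ p) = 0 := by
          apply pow_p_coeff_zero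
          intro e hcon
          have hcf := DFunLike.congr_fun hcon (⟨k, hk⟩ : Fin n)
          rw [estar_apply, if_pos (by simp; omega)] at hcf
          rw [Finsupp.smul_apply, smul_eq_mul] at hcf
          rcases Nat.eq_zero_or_pos (e ⟨k, hk⟩) with h0 | h0
          · rw [h0] at hcf; omega
          · have h2 : 2 ≤ p * e ⟨k, hk⟩ :=
              le_trans hp2 (Nat.le_mul_of_pos_right p h0)
            omega
        have hAs : ∀ e ∈ ((DD p n k i) ^ p).support, ∀ t : Fin n, k + 1 ≤ t.val → e t = 0 := by
          intro e he t ht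
          obtain ⟨e', he', rfl⟩ := pow_p_supp p _ he
          rw [Finsupp.smul_apply, ihs' e' he' t (by omega), smul_zero]
        have hAu : ∀ e ∈ ((DD p n k i) ^ p).support,
            (∀ a b : Fin n, a.val < k + 1 → b.val < k + 1 → a ≤ b → e a ≤ e b) → False := by
          intro e he hincr
          obtain ⟨e', he', rfl⟩ := pow_p_supp p _ he
          have h1 : ∀ a b : Fin n, a.val < k → b.val < k → a ≤ b → e' a ≤ e' b := by
            intro a b ha hb hab
            have h2 := hincr a b (by omega) (by omega) hab
            simp only [Finsupp.smul_apply, smul_eq_mul] at h2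
            exact Nat.le_of_mul_le_mul_left h2 (by omega)
          have he'' := ihu' e' he' h1
          -- k ≥ 1 since i + 1 ≤ k
          have hk1' : 1 ≤ k := by omega
          have hlt : k - 1 < n := by omega
          have ha : (p • e') ⟨k-1, hlt⟩ = p := by
            rw [Finsupp.smul_apply, he'', estar_apply, if_pos (by simp; omega)]
            simp
          have hb : (p • e') ⟨k, hk⟩ = 0 := by
            rw [Finsupp.smul_apply, he'', estar_apply, if_neg (by simp)]
            simp
          have := hincr ⟨k-1, hlt⟩ ⟨k, hk⟩ (by simp) (by simp)
            (by rw [Fin.mk_le_mk]; omega)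
          rw [ha, hb] at this
          omega
        rw [DD, hxv]
        classical
        refine ⟨?_, ?_, ?_⟩
        · rw [MvPolynomial.coeff_add, hAc, hBc, zero_add]
        · intro e he t ht
          rcases Finset.mem_union.mp (MvPolynomial.support_add he) with h | h
          · exact hAs e h t ht
          · exact hBs e h t ht
        · intro e he hincr
          rcases Finset.mem_union.mp (MvPolynomial.support_add he) with h | h
          · exact absurd (hAu e h hincr) (by simp)
          · exact hBu e h hincr
    · have : i = k + 1 := by omega
      subst this
      rw [DD_diag, estar_degenerate n le_rfl]
      refine ⟨by simp, ?_, ?_⟩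
      · intro e he t _
        rw [mem_support_one p n he]
        rfl
      · intro e he _
        rw [mem_support_one p n he]
end main


/-- the monomial `h_{j+1} ⋯ h_n` occurs in `d_{n,j}` with coefficient `1`,
and it is the unique monomial of `d_{n,j}` with weakly increasing exponent vector. -/
theorem stmt14 (p n : ℕ) [Fact p.Prime] (j : ℕ) (hj : j ≤ n - 1) (hn : 1 ≤ n)
    (P : MvPolynomial (Fin n) (ZMod p)) (hP : aeval (hGen p n) P = d p n n j) :
    MvPolynomial.coeff
      (Finsupp.equivFunOnFinite.symm (fun t : Fin n => if t.val < j then 0 else 1)) P = 1 ∧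
    (Finsupp.equivFunOnFinite.symm (fun t : Fin n => if t.val < j then 0 else 1)) ∈
      P.support ∧
    ∀ e ∈ P.support, (∀ a b : Fin n, a ≤ b → e a ≤ e b) →
      e = Finsupp.equivFunOnFinite.symm (fun t : Fin n => if t.val < j then 0 else 1) := by
  have hjn : j < n := by omega
  have hDD := DD_aeval p n n le_rfl j (by omega)
  have hPD : P = DD p n n j := aeval_hGen_injective p n (hP.trans hDD.symm)
  obtain ⟨hc, hs, hu⟩ := DD_support p n n le_rfl j (by omega)
  have hestar : estar n n j
      = Finsupp.equivFunOnFinite.symm (fun t : Fin n => if t.val < j then 0 else 1) := by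
    ext t
    rw [estar_apply, Finsupp.equivFunOnFinite_symm_apply_apply]
    have ht := t.isLt
    by_cases h : j ≤ t.val
    · rw [if_pos ⟨h, ht⟩, if_neg (by omega)]
    · rw [if_neg (by omega), if_pos (by omega)]
  subst hPD
  rw [← hestar]
  refine ⟨hc, ?_, ?_⟩
  · rw [MvPolynomial.mem_support_iff, hc]
    exact one_ne_zero
  · intro e he hincr
    exact hu e he (fun a b _ _ hab => hincr a b hab)
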